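/- Let P and Q be probability measures on a measurable space X, let F be a convex set of measurable functions with F ⊆ L²(P) ∩ L¹(Q) and f ∈ F ⟹ −f ∈ F, and let μ > 0. Suppose f* ∈ F attains the supremum over f ∈ F of { E_Q[f] − E_P[f] − (μ/4)·Var_P[f] }. Define δ := E_Q[f*] − E_P[f*] − (μ/2)·Var_P[f*] and let R* be the signed measure with dR*/dP = 1 + (μ/2)(f* − E_P[f*]). Then δ ≥ 0, R*(X) = 1, IPM_F(Q, R*) = δ, and R* minimizes D₂(R‖P) among all finite signed measures R with R ≪ P, dR/dP ∈ L²(P), R(X) = 1, and IPM_F(Q, R) ≤ δ. -/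

import Mathlib

open MeasureTheory

private lemma mul_int {X : Type*} [MeasurableSpace X] {P : Measure X} {f g : X → ℝ}
    (hf : MemLp f 2 P) (hg : MemLp g 2 P) : Integrable (fun x => f x * g x) P := by
  have h1 : Integrable (fun x => (((f x + g x) ^ 2 - f x ^ 2) - g x ^ 2) / 2) P :=
    (((hf.add hg).integrable_sq.sub hf.integrable_sq).sub hg.integrable_sq).div_const 2
  exact h1.congr (Filter.Eventually.of_forall fun x => by ring)

private lemma expand_w {X : Type*} [MeasurableSpace X] (P : Measure X)
    [IsProbabilityMeasure P] (μ m : ℝ) {fstar f : X → ℝ}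
    (hfs : MemLp fstar 2 P) (hf : MemLp f 2 P) :
    ∫ x, f x * (1 + μ / 2 * (fstar x - m)) ∂P
      = (∫ x, f x ∂P) + (μ / 2) * ((∫ x, f x * fstar x ∂P) - (∫ x, f x ∂P) * m) := by
  have hintf : Integrable f P := hf.integrable one_le_two
  have hmul : Integrable (fun x => f x * fstar x) P := mul_int hf hfs
  have heq : (fun x => f x * (1 + μ / 2 * (fstar x - m)))
      = fun x => f x + ((μ / 2) * (f x * fstar x) - ((μ / 2) * m) * f x) :=
    funext fun x => by ring
  have h2 : Integrable (fun x => (μ / 2) * (f x * fstar x) - ((μ / 2) * m) * f x) P :=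
    (hmul.const_mul _).sub (hintf.const_mul _)
  have h3 : Integrable (fun x => (μ / 2) * (f x * fstar x)) P := hmul.const_mul _
  have h4 : Integrable (fun x => ((μ / 2) * m) * f x) P := hintf.const_mul _
  rw [heq, integral_add hintf h2, integral_sub h3 h4, integral_const_mul, integral_const_mul]
  ring

set_option maxHeartbeats 1000000 in
/-- duality for the constrained balancing-weights problem.  Signed measures
`R ≪ P` with `dR/dP ∈ L²(P)` are encoded by their densities `w = dR/dP`, so that
`∫ f dR = ∫ f·w dP` and `D₂(R‖P) = ∫ (w² − 1) dP`.  If `f* ∈ F` attains the supremum of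
`E_Q[f] − E_P[f] − (μ/4)·Var_P[f]` over the convex symmetric class `F ⊆ L²(P) ∩ L¹(Q)`,
`δ := E_Q[f*] − E_P[f*] − (μ/2)·Var_P[f*]` and `dR*/dP = 1 + (μ/2)(f* − E_P[f*])`, then
`δ ≥ 0`, `R*(X) = 1`, `IPM_F(Q,R*) = δ`, and `R*` minimizes `D₂(R‖P)` over all feasible `R`
with `IPM_F(Q,R) ≤ δ`. -/
theorem stmt_3 {X : Type*} [MeasurableSpace X] (P Q : Measure X)
    [IsProbabilityMeasure P] [IsProbabilityMeasure Q]
    (F : Set (X → ℝ)) (hconv : Convex ℝ F)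
    (hF : ∀ f ∈ F, MemLp f 2 P ∧ Integrable f Q)
    (hsymm : ∀ f ∈ F, -f ∈ F)
    (μ : ℝ) (hμ : 0 < μ)
    (obj : (X → ℝ) → ℝ)
    (hobj : obj = fun f => (∫ x, f x ∂Q) - (∫ x, f x ∂P)
      - (μ / 4) * ((∫ x, (f x) ^ 2 ∂P) - (∫ x, f x ∂P) ^ 2))
    (fstar : X → ℝ) (hfstarF : fstar ∈ F)
    (hfstarmax : ∀ f ∈ F, obj f ≤ obj fstar)
    (δ : ℝ)
    (hδ : δ = (∫ x, fstar x ∂Q) - (∫ x, fstar x ∂P)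
      - (μ / 2) * ((∫ x, (fstar x) ^ 2 ∂P) - (∫ x, fstar x ∂P) ^ 2))
    (wstar : X → ℝ) (hwstar : wstar = fun x => 1 + (μ / 2) * (fstar x - ∫ x', fstar x' ∂P)) :
    -- δ ≥ 0
    0 ≤ δ ∧
    -- R*(X) = 1
    (∫ x, wstar x ∂P) = 1 ∧
    -- IPM_F(Q, R*) = δ  (δ is the least upper bound of the IPM set for R*)
    IsLUB ((fun f : X → ℝ => (∫ x, f x ∂Q) - ∫ x, f x * wstar x ∂P) '' F) δ ∧
    -- R* minimizes D₂(R‖P) among feasible R with IPM_F(Q,R) ≤ δ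
    (∀ w : X → ℝ, MemLp w 2 P → (∫ x, w x ∂P) = 1 →
      (∀ f ∈ F, (∫ x, f x ∂Q) - (∫ x, f x * w x ∂P) ≤ δ) →
      (∫ x, ((wstar x) ^ 2 - 1) ∂P) ≤ ∫ x, ((w x) ^ 2 - 1) ∂P) := by
  obtain ⟨hfstar2, hfstarQ⟩ := hF fstar hfstarF
  have hfstarP : Integrable fstar P := hfstar2.integrable one_le_two
  set m : ℝ := ∫ x, fstar x ∂P with hm
  set S : ℝ := ∫ x, (fstar x) ^ 2 ∂P with hS
  set qs : ℝ := ∫ x, fstar x ∂Q with hqs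
  have hSS : ∫ x, fstar x * fstar x ∂P = S := by rw [hS]; simp_rw [← pow_two]
  -- the key first-order optimality inequality
  have key : ∀ f ∈ F, (∫ x, f x ∂Q) - (∫ x, f x ∂P)
      - (μ / 2) * ((∫ x, f x * fstar x ∂P) - (∫ x, f x ∂P) * m) ≤ δ := by
    intro f hfF
    obtain ⟨hf2, hfQ⟩ := hF f hfF
    have hfP : Integrable f P := hf2.integrable one_le_two
    set mf : ℝ := ∫ x, f x ∂P with hmf
    set qf : ℝ := ∫ x, f x ∂Q with hqf
    set c : ℝ := ∫ x, f x * fstar x ∂P with hc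
    set s : ℝ := ∫ x, (f x) ^ 2 ∂P with hs
    set K : ℝ := |(μ / 4) * (s - 2 * c + S - (mf - m) ^ 2)| with hK
    have hK0 : 0 ≤ K := abs_nonneg _
    have hK1 : (μ / 4) * (s - 2 * c + S - (mf - m) ^ 2) ≤ K := le_abs_self _
    have hA : ∀ t : ℝ, 0 < t → t ≤ 1 →
        qf - mf - (μ / 2) * (c - mf * m) - δ ≤ t * K := by
      intro t ht ht1
      have hmem : (1 - t) • fstar + t • f ∈ F :=
        hconv hfstarF hfF (by linarith) ht.le (by ring)
      have hobj' := hfstarmax _ hmem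
      rw [hobj] at hobj'
      simp only at hobj'
      have hg : ((1 - t) • fstar + t • f) = fun x => (1 - t) * fstar x + t * f x := by
        funext x; simp [smul_eq_mul]
      rw [hg] at hobj'
      have e1 : ∫ x, ((1 - t) * fstar x + t * f x) ∂Q = (1 - t) * qs + t * qf := by
        have ha : Integrable (fun x => (1 - t) * fstar x) Q := hfstarQ.const_mul _
        have hb : Integrable (fun x => t * f x) Q := hfQ.const_mul _
        rw [integral_add ha hb, integral_const_mul, integral_const_mul, hqs, hqf]
      have e2 : ∫ x, ((1 - t) * fstar x + t * f x) ∂P = (1 - t) * m + t * mf := by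
        have ha : Integrable (fun x => (1 - t) * fstar x) P := hfstarP.const_mul _
        have hb : Integrable (fun x => t * f x) P := hfP.const_mul _
        rw [integral_add ha hb, integral_const_mul, integral_const_mul, hm, hmf]
      have e3 : ∫ x, ((1 - t) * fstar x + t * f x) ^ 2 ∂P
          = (1 - t) ^ 2 * S + 2 * t * (1 - t) * c + t ^ 2 * s := by
        have heq : (fun x => ((1 - t) * fstar x + t * f x) ^ 2)
            = fun x => (1 - t) ^ 2 * (fstar x) ^ 2
              + ((2 * t * (1 - t)) * (f x * fstar x) + t ^ 2 * (f x) ^ 2) :=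
          funext fun x => by ring
        have ha : Integrable (fun x => (1 - t) ^ 2 * (fstar x) ^ 2) P :=
          hfstar2.integrable_sq.const_mul _
        have hb : Integrable (fun x => (2 * t * (1 - t)) * (f x * fstar x)) P :=
          (mul_int hf2 hfstar2).const_mul _
        have hcc : Integrable (fun x => t ^ 2 * (f x) ^ 2) P :=
          hf2.integrable_sq.const_mul _
        have hd : Integrable (fun x => (2 * t * (1 - t)) * (f x * fstar x)
            + t ^ 2 * (f x) ^ 2) P := hb.add hcc
        rw [heq, integral_add ha hd, integral_add hb hcc,
          integral_const_mul, integral_const_mul, integral_const_mul, hS, hc, hs]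
        ring
      rw [e1, e2, e3] at hobj'
      have h1 : t * (qf - mf - (μ / 2) * (c - mf * m) - δ)
          ≤ t ^ 2 * ((μ / 4) * (s - 2 * c + S - (mf - m) ^ 2)) := by
        rw [hδ]; linarith [hobj']
      have h2 : t ^ 2 * ((μ / 4) * (s - 2 * c + S - (mf - m) ^ 2)) ≤ t * (t * K) := by
        have h2a := mul_le_mul_of_nonneg_left hK1 (sq_nonneg t)
        have h2b : t * (t * K) = t ^ 2 * K := by ring
        linarith [h2a]
      exact le_of_mul_le_mul_left (h1.trans h2) ht
    have : ∀ ε : ℝ, 0 < ε → qf - mf - (μ / 2) * (c - mf * m) ≤ δ + ε := by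
      intro ε hε
      set t : ℝ := min 1 (ε / (K + 1)) with htd
      have ht0 : 0 < t := lt_min one_pos (div_pos hε (by linarith))
      have ht1 : t ≤ 1 := min_le_left _ _
      have ht2 : t ≤ ε / (K + 1) := min_le_right _ _
      have ht3 : t * (K + 1) ≤ ε := (le_div_iff₀ (by linarith)).mp ht2
      have := hA t ht0 ht1
      nlinarith [mul_le_mul_of_nonneg_left hK0 ht0.le]
    linarith [le_of_forall_pos_le_add this]
  -- evaluation of ∫ f·wstar
  have hwP : ∀ f : X → ℝ, MemLp f 2 P → ∫ x, f x * wstar x ∂P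
      = (∫ x, f x ∂P) + (μ / 2) * ((∫ x, f x * fstar x ∂P) - (∫ x, f x ∂P) * m) := by
    intro f hf2
    simp only [hwstar]
    exact expand_w P μ m hfstar2 hf2
  -- δ ≥ 0
  have hδ0 : 0 ≤ δ := by
    have hkey := key (-fstar) (hsymm fstar hfstarF)
    have e1 : ∫ x, (-fstar) x ∂Q = -qs := by
      simp only [Pi.neg_apply]; rw [integral_neg, hqs]
    have e2 : ∫ x, (-fstar) x ∂P = -m := by
      simp only [Pi.neg_apply]; rw [integral_neg, hm]
    have e3 : ∫ x, (-fstar) x * fstar x ∂P = -S := by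
      simp only [Pi.neg_apply, neg_mul]; rw [integral_neg, hSS]
    rw [e1, e2, e3] at hkey
    nlinarith [hkey, hδ]
  refine ⟨hδ0, ?_, ?_, ?_⟩
  · -- ∫ wstar = 1
    simp only [hwstar]
    have ha : Integrable (fun x => (μ / 2) * (fstar x - m)) P :=
      (hfstarP.sub (integrable_const m)).const_mul _
    have hb : Integrable (fun x : X => fstar x - m) P := hfstarP.sub (integrable_const m)
    rw [integral_add (integrable_const 1) ha, integral_const_mul,
      integral_sub hfstarP (integrable_const m), integral_const]
    simp [hm]
  · -- IsLUB
    constructor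
    · rintro y ⟨f, hfF, rfl⟩
      simp only
      rw [hwP f (hF f hfF).1]
      have := key f hfF
      linarith
    · intro y hy
      have hmem : δ ∈ ((fun f : X → ℝ => (∫ x, f x ∂Q) - ∫ x, f x * wstar x ∂P) '' F) := by
        refine ⟨fstar, hfstarF, ?_⟩
        simp only
        rw [hwP fstar hfstar2, hSS, hδ]
        ring
      exact hy hmem
  · -- minimality
    intro w hw2 hw1 hcon
    have hwint : Integrable w P := hw2.integrable one_le_two
    have hwstar2 : MemLp wstar 2 P := by
      rw [hwstar]
      exact (memLp_const (1:ℝ)).add ((hfstar2.sub (memLp_const m)).const_mul (μ / 2))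
    have hc := hcon fstar hfstarF
    have hcomm : ∫ x, fstar x * w x ∂P = ∫ x, w x * fstar x ∂P := by
      simp_rw [mul_comm]
    rw [hcomm] at hc
    set cw : ℝ := ∫ x, w x * fstar x ∂P with hcw
    have hIeq : ∫ x, w x * wstar x ∂P = 1 + (μ / 2) * (cw - m) := by
      rw [hwP w hw2, hw1, hcw]; ring
    have hJ : ∫ x, (wstar x) ^ 2 ∂P = 1 + (μ ^ 2 / 4) * (S - m ^ 2) := by
      have heq : (fun x => (wstar x) ^ 2)
          = fun x => (1 - (μ / 2) * m) ^ 2 + ((μ * (1 - (μ / 2) * m)) * fstar x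
            + (μ ^ 2 / 4) * (fstar x) ^ 2) := by
        funext x; simp only [hwstar]; ring
      have ha : Integrable (fun x => (μ * (1 - (μ / 2) * m)) * fstar x) P :=
        hfstarP.const_mul _
      have hb : Integrable (fun x => (μ ^ 2 / 4) * (fstar x) ^ 2) P :=
        hfstar2.integrable_sq.const_mul _
      have hab : Integrable (fun x => (μ * (1 - (μ / 2) * m)) * fstar x
          + (μ ^ 2 / 4) * (fstar x) ^ 2) P := ha.add hb
      rw [heq, integral_add (integrable_const _) hab, integral_add ha hb,
        integral_const_mul, integral_const_mul, integral_const, hm, hS]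
      simp
      ring
    have hsq : ∫ x, (w x - wstar x) ^ 2 ∂P
        = (∫ x, (w x) ^ 2 ∂P) - 2 * (∫ x, w x * wstar x ∂P) + ∫ x, (wstar x) ^ 2 ∂P := by
      have heq : (fun x => (w x - wstar x) ^ 2)
          = fun x => ((w x) ^ 2 - (2 : ℝ) * (w x * wstar x)) + (wstar x) ^ 2 :=
        funext fun x => by ring
      have ha : Integrable (fun x => (2 : ℝ) * (w x * wstar x)) P :=
        (mul_int hw2 hwstar2).const_mul 2
      have hb : Integrable (fun x => (w x) ^ 2 - (2 : ℝ) * (w x * wstar x)) P :=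
        hw2.integrable_sq.sub ha
      rw [heq, integral_add hb hwstar2.integrable_sq,
        integral_sub hw2.integrable_sq ha, integral_const_mul]
    have hnn : 0 ≤ ∫ x, (w x - wstar x) ^ 2 ∂P :=
      integral_nonneg fun x => sq_nonneg _
    rw [integral_sub hwstar2.integrable_sq (integrable_const 1),
      integral_sub hw2.integrable_sq (integrable_const 1)]
    have h5 : m + (μ / 2) * (S - m ^ 2) ≤ cw := by linarith [hδ]
    have h6 := mul_le_mul_of_nonneg_left h5 (by linarith : (0 : ℝ) ≤ μ / 2)
    have h7 : (μ / 2) * (m + (μ / 2) * (S - m ^ 2))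
        = (μ / 2) * m + (μ ^ 2 / 4) * (S - m ^ 2) := by ring
    have h8 : (μ / 2) * (cw - m) = (μ / 2) * cw - (μ / 2) * m := by ring
    linarith [hsq, hnn, hIeq, h6, hJ, h7, h8]
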